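/- arXiv:2106.12141 — 2 statements merged into one kernel-verified Lean document; each statement's English description precedes it below -/
import Mathlib

section
/- Block matrix identity for the middle digraph: With notation as in the paper, the vertex-weighted Laplacian of M(D) equals the block matrix [[F, −M], [−LQ, B + F^ι − W^ι]], where F is the diagonal matrix of weighted outdegrees of D, M is the n×m matrix with M_{ve}=χ_e if t(e)=v and 0 otherwise, L is the m×n matrix with L_{ev}=1 if h(e)=v and 0 otherwise, Q is the diagonal matrix of vertex weights, B is diagonal with B_{ee}=χ(h(e)), W^ι has entry χ_f at (e,f) if h(e)=t(f) and 0 otherwise, and F^ι is diagonal with (F^ι)_{ee} = Σ_{g: t(g)=h(e)} χ_g. Moreover W^ι = L·M and W = M·L, where W is the weighted adjacency matrix of D (W_{vw}=χ_e if e=(v,w)∈A(D), else 0). -/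
open scoped Classical BigOperators

section Digraph

variable {V : Type*} [Fintype V] [DecidableEq V]

/-- `T` is a spanning in-tree (arborescence toward the root) of the digraph
with arc set containing `T`, rooted at `r`: every vertex other than `r` has
exactly one outgoing arc in `T`, the root has none, and `T` has no directed cycle. -/
def IsSpTree (T : Finset (V × V)) (r : V) : Prop :=
  (∀ v : V, v ≠ r → ∃! a : V × V, a ∈ T ∧ a.1 = v) ∧
  (∀ a ∈ T, a.1 ≠ r) ∧
  (∀ (v : V) (l : List V), ¬ List.Chain (fun a b => (a, b) ∈ T) v (l ++ [v]))

/-- The set of spanning trees of the digraph with arc set `arcs`, rooted at `r`. -/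
noncomputable def trees (arcs : Finset (V × V)) (r : V) : Finset (Finset (V × V)) :=
  arcs.powerset.filter (fun T => IsSpTree T r)

/-- Edge-weighted complexity with root `r`: `κ^{edge}(D, r, χ)`. -/
noncomputable def kappaEdgeRooted (arcs : Finset (V × V)) (χ : V × V → ℝ) (r : V) : ℝ :=
  ∑ T ∈ trees arcs r, ∏ a ∈ T, χ a

/-- Total edge-weighted complexity `κ^{edge}(D, χ)` (over all roots). -/
noncomputable def kappaEdge (arcs : Finset (V × V)) (χ : V × V → ℝ) : ℝ :=
  ∑ r : V, kappaEdgeRooted arcs χ r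

/-- Vertex-weighted complexity with root `r`: `κ^{vertex}(D, r, χ)`. -/
noncomputable def kappaVertexRooted (arcs : Finset (V × V)) (χv : V → ℝ) (r : V) : ℝ :=
  ∑ T ∈ trees arcs r, ∏ a ∈ T, χv a.2

/-- Total vertex-weighted complexity `κ^{vertex}(D, χ)` (over all roots). -/
noncomputable def kappaVertex (arcs : Finset (V × V)) (χv : V → ℝ) : ℝ :=
  ∑ r : V, kappaVertexRooted arcs χv r

/-- Weighted adjacency matrix `W`: `W_{ij} = χ_{ij}` if `(i,j)` is an arc, else `0`. -/
def adjW (arcs : Finset (V × V)) (χ : V × V → ℝ) : Matrix V V ℝ :=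
  fun i j => if (i, j) ∈ arcs then χ (i, j) else 0

/-- Edge-weighted Laplacian `Δ^{edge}`. -/
def lapEdge (arcs : Finset (V × V)) (χ : V × V → ℝ) : Matrix V V ℝ :=
  fun i j => if i = j then ∑ k ∈ Finset.univ.erase i, adjW arcs χ i k
             else - adjW arcs χ i j

/-- Vertex-weighted Laplacian `Δ^{vertex}`. -/
noncomputable def lapVertex (arcs : Finset (V × V)) (χv : V → ℝ) : Matrix V V ℝ :=
  fun u v => if u = v then ∑ a ∈ arcs.filter (fun a => a.1 = u), χv a.2
             else if (u, v) ∈ arcs then - χv v else 0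

/-- Matrix obtained by deleting the row and column indexed by `v`. -/
def minorAt (A : Matrix V V ℝ) (v : V) : Matrix {u : V // u ≠ v} {u : V // u ≠ v} ℝ :=
  A.submatrix (fun u => (u : V)) (fun u => (u : V))

/-- Out-degree of `v`. -/
def outdeg (arcs : Finset (V × V)) (v : V) : ℕ := (arcs.filter (fun a => a.1 = v)).card

/-- In-degree of `v`. -/
def indeg (arcs : Finset (V × V)) (v : V) : ℕ := (arcs.filter (fun a => a.2 = v)).card

/-- Weighted out-degree `d_v = Σ_{t(e) = v} χ_e`. -/
noncomputable def wOut (arcs : Finset (V × V)) (χ : V × V → ℝ) (v : V) : ℝ :=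
  ∑ a ∈ arcs.filter (fun a => a.1 = v), χ a

end Digraph

section MiddleDigraph

variable {V : Type*} [Fintype V] [DecidableEq V]

/-- Arc set of the middle digraph `M(D)` on the vertex set `V(D) ⊕ A(D)`:
each arc `e = (u, v)` of `D` is replaced by the directed path `u → e → v`, and
there is an arc `e → f` whenever the head of `e` equals the tail of `f`. -/
noncomputable def midArcs (arcs : Finset (V × V)) :
    Finset ((V ⊕ {a : V × V // a ∈ arcs}) × (V ⊕ {a : V × V // a ∈ arcs})) :=
  Finset.univ.filter (fun p =>
    match p with
    | (Sum.inl u, Sum.inr e) => (e : V × V).1 = u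
    | (Sum.inr e, Sum.inl v) => (e : V × V).2 = v
    | (Sum.inr e, Sum.inr f) => (e : V × V).2 = (f : V × V).1
    | _ => False)

/-- Vertex weights of `M(D)`: vertices coming from `V(D)` keep their vertex weight,
and the vertex corresponding to an arc `e` gets the arc weight `χ_e`. -/
noncomputable def midWeight (arcs : Finset (V × V)) (χv : V → ℝ) (χ : V × V → ℝ) :
    V ⊕ {a : V × V // a ∈ arcs} → ℝ :=
  Sum.elim χv (fun e => χ (e : V × V))

end MiddleDigraph

section BlockMatrices

variable {V : Type*} [Fintype V] [DecidableEq V]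

/-- `F`: diagonal matrix of weighted outdegrees of `D`. -/
noncomputable def matF (arcs : Finset (V × V)) (χ : V × V → ℝ) : Matrix V V ℝ :=
  Matrix.of fun u w => if u = w then wOut arcs χ u else 0

/-- `M`: `M_{ve} = χ_e` if `t(e) = v`, else `0`. -/
noncomputable def matM (arcs : Finset (V × V)) (χ : V × V → ℝ) :
    Matrix V {a : V × V // a ∈ arcs} ℝ :=
  Matrix.of fun v e => if (e : V × V).1 = v then χ (e : V × V) else 0

/-- `L`: `L_{ev} = 1` if `h(e) = v`, else `0`. -/
def matL (arcs : Finset (V × V)) : Matrix {a : V × V // a ∈ arcs} V ℝ :=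
  Matrix.of fun e v => if (e : V × V).2 = v then 1 else 0

/-- `Q`: diagonal matrix of vertex weights. -/
def matQ (χv : V → ℝ) : Matrix V V ℝ :=
  Matrix.of fun u w => if u = w then χv u else 0

/-- `B`: diagonal with `B_{ee} = χ(h(e))`. -/
def matB (arcs : Finset (V × V)) (χv : V → ℝ) :
    Matrix {a : V × V // a ∈ arcs} {a : V × V // a ∈ arcs} ℝ :=
  Matrix.of fun e f => if e = f then χv (e : V × V).2 else 0

/-- `W^ι`: entry `χ_f` at `(e, f)` if `h(e) = t(f)`, else `0`. -/
noncomputable def matWiota (arcs : Finset (V × V)) (χ : V × V → ℝ) :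
    Matrix {a : V × V // a ∈ arcs} {a : V × V // a ∈ arcs} ℝ :=
  Matrix.of fun e f => if (e : V × V).2 = (f : V × V).1 then χ (f : V × V) else 0

/-- `F^ι`: diagonal with `(F^ι)_{ee} = Σ_{g : t(g) = h(e)} χ_g`. -/
noncomputable def matFiota (arcs : Finset (V × V)) (χ : V × V → ℝ) :
    Matrix {a : V × V // a ∈ arcs} {a : V × V // a ∈ arcs} ℝ :=
  Matrix.of fun e f => if e = f then wOut arcs χ (e : V × V).2 else 0

end BlockMatrices

section Aux
variable {V : Type*} [Fintype V] [DecidableEq V]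

private lemma diag_inl (arcs : Finset (V × V)) (χv : V → ℝ) (χ : V × V → ℝ) (u : V) :
    ∑ a ∈ (midArcs arcs).filter (fun a => a.1 = Sum.inl u), midWeight arcs χv χ a.2
      = wOut arcs χ u := by
  rw [midArcs, Finset.filter_filter, Finset.sum_filter]
  rw [Fintype.sum_prod_type]
  rw [Fintype.sum_sum_type]
  simp only [Fintype.sum_sum_type, midWeight, Sum.elim_inl, Sum.elim_inr]
  simp
  rw [wOut, Finset.sum_filter, ← Finset.sum_attach arcs (fun a => if a.1 = u then χ a else 0)]
  rw [Finset.sum_comm]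
  refine Finset.sum_congr rfl fun a _ => ?_
  have h2 : ∀ x : V, (if ((a : V × V)).1 = x ∧ x = u then χ (a : V × V) else 0)
      = if x = u then (if ((a : V × V)).1 = u then χ (a : V × V) else 0) else 0 := by
    intro x; by_cases h1 : x = u <;> simp [h1]
  rw [Finset.sum_congr rfl fun x _ => h2 x, Finset.sum_ite_eq' Finset.univ u]
  simp

private lemma diag_inr (arcs : Finset (V × V)) (χv : V → ℝ) (χ : V × V → ℝ)
    (e : {a : V × V // a ∈ arcs}) :
    ∑ a ∈ (midArcs arcs).filter (fun a => a.1 = Sum.inr e), midWeight arcs χv χ a.2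
      = χv (e : V × V).2 + wOut arcs χ (e : V × V).2 := by
  rw [midArcs, Finset.filter_filter, Finset.sum_filter]
  rw [Fintype.sum_prod_type]
  rw [Fintype.sum_sum_type]
  simp only [Fintype.sum_sum_type, midWeight, Sum.elim_inl, Sum.elim_inr]
  simp
  have h1 : ∀ x ∈ arcs.attach, ((∑ x_1 : V, if ((x : V × V)).2 = x_1 ∧ x = e then χv x_1 else 0) +
        ∑ x_1 ∈ arcs.attach, if ((x : V × V)).2 = ((x_1 : V × V)).1 ∧ x = e then χ (x_1 : V × V) else 0) =
      if x = e then (χv ((e : V × V)).2 + ∑ x_1 ∈ arcs.attach, if ((e : V × V)).2 = ((x_1 : V × V)).1 then χ (x_1 : V × V) else 0) else 0 := by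
    intro x _
    by_cases hx : x = e <;> simp [hx]
  rw [Finset.sum_congr rfl h1, Finset.sum_ite_eq' arcs.attach e, if_pos (Finset.mem_attach _ _)]
  rw [wOut, Finset.sum_filter]
  rw [Finset.sum_attach arcs (fun a => if (e : V × V).2 = a.1 then χ a else 0)]
  refine congrArg _ (Finset.sum_congr rfl fun a _ => ?_)
  rcases eq_or_ne a.1 ((e : V × V)).2 with h | h
  · simp [h]
  · simp [h, Ne.symm h]

end Aux

/-- **Block matrix identity for the middle digraph.** The vertex-weighted Laplacian of
`M(D)` is the block matrix `[[F, −M], [−LQ, B + F^ι − W^ι]]`; moreover `W^ι = L·M`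
and `W = M·L`. -/
theorem lapVertex_middle_eq_fromBlocks {V : Type*} [Fintype V] [DecidableEq V]
    (arcs : Finset (V × V)) (χv : V → ℝ) (χ : V × V → ℝ)
    (hsimple : ∀ v : V, (v, v) ∉ arcs) :
    lapVertex (midArcs arcs) (midWeight arcs χv χ) =
        Matrix.fromBlocks (matF arcs χ) (-(matM arcs χ))
          (-(matL arcs * matQ χv)) (matB arcs χv + matFiota arcs χ - matWiota arcs χ) ∧
      matWiota arcs χ = matL arcs * matM arcs χ ∧
      adjW arcs χ = matM arcs χ * matL arcs := by
  refine ⟨?_, ?_, ?_⟩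
  · ext i j
    cases i with
    | inl u =>
      cases j with
      | inl w =>
        by_cases h : u = w
        · subst h
          simp only [lapVertex, if_pos rfl, Matrix.fromBlocks_apply₁₁]
          rw [diag_inl]
          simp [matF]
        · have hmem : (Sum.inl u, Sum.inl w) ∉ midArcs arcs := by simp [midArcs]
          simp [lapVertex, h, hmem, matF, Matrix.fromBlocks_apply₁₁]
      | inr e =>
        have : (Sum.inl u, Sum.inr e) ∈ midArcs arcs ↔ (e : V × V).1 = u := by
          simp [midArcs]
        simp only [lapVertex, Matrix.fromBlocks_apply₁₂]
        rw [if_neg (by simp)]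
        by_cases h : (e : V × V).1 = u
        · simp [this, h, matM, midWeight]
        · simp [this, h, matM, midWeight]
    | inr e =>
      cases j with
      | inl v =>
        have hmem : (Sum.inr e, Sum.inl v) ∈ midArcs arcs ↔ (e : V × V).2 = v := by
          simp [midArcs]
        simp only [lapVertex, Matrix.fromBlocks_apply₂₁]
        rw [if_neg (by simp)]
        by_cases h : (e : V × V).2 = v
        · simp [hmem, h, matL, matQ, Matrix.mul_apply, midWeight]
        · simp [hmem, h, matL, matQ, Matrix.mul_apply, midWeight]
      | inr f =>
        by_cases h : e = f
        · subst h
          have hloop : (e : V × V).2 ≠ (e : V × V).1 := by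
            intro hc
            have h2 : ((e : V × V).1, (e : V × V).2) ∈ arcs := by
              simpa using e.2
            rw [hc] at h2
            exact hsimple _ h2
          simp only [lapVertex, if_pos rfl, Matrix.fromBlocks_apply₂₂]
          rw [diag_inr]
          simp [matB, matFiota, matWiota, Matrix.sub_apply, Matrix.add_apply, hloop]
        · have hmem : (Sum.inr e, Sum.inr f) ∈ midArcs arcs ↔ (e : V × V).2 = (f : V × V).1 := by
            simp [midArcs]
          have hne : Sum.inr (α := V) e ≠ Sum.inr f := by simp [h]
          simp only [lapVertex, Matrix.fromBlocks_apply₂₂, if_neg hne]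
          by_cases h2 : (e : V × V).2 = (f : V × V).1
          · simp [hmem, h2, matB, matFiota, matWiota, Matrix.sub_apply, Matrix.add_apply,
              midWeight, h]
          · simp [hmem, h2, matB, matFiota, matWiota, Matrix.sub_apply, Matrix.add_apply,
              midWeight, h]
  · ext e f
    simp only [matWiota, matL, matM, Matrix.mul_apply, Matrix.of_apply]
    rw [Finset.sum_congr rfl (fun v _ => by
      rw [show (if (e : V × V).2 = v then (1:ℝ) else 0) * (if (f : V × V).1 = v then χ (f : V × V) else 0)
        = if v = (e : V × V).2 then (if (f : V × V).1 = (e : V × V).2 then χ (f : V × V) else 0) else 0 by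
        by_cases h1 : v = (e : V × V).2 <;> simp [h1, eq_comm]])]
    rw [Finset.sum_ite_eq' Finset.univ]
    simp [eq_comm]
  · ext v w
    simp only [adjW, matM, matL, Matrix.mul_apply, Matrix.of_apply]
    rw [Finset.sum_congr rfl (fun e _ => by
      rw [show (if (e : V × V).1 = v then χ (e : V × V) else 0) * (if (e : V × V).2 = w then (1:ℝ) else 0)
        = if (e : V × V) = (v, w) then χ (v, w) else 0 by
        rcases eq_or_ne (e : V × V) (v, w) with h | h
        · simp [h]
        · rw [if_neg h]
          by_cases h1 : (e : V × V).1 = v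
          · by_cases h2 : (e : V × V).2 = w
            · exact absurd (Prod.ext h1 h2) h
            · simp [h2]
          · simp [h1]])]
    rw [Finset.sum_coe_sort arcs (fun a => if a = (v, w) then χ (v, w) else 0)]
    rw [Finset.sum_ite_eq' arcs (v, w)]
end

section
/- Rooted version of the main theorem: Let D be a weighted digraph with vertex weights χ_v and arc weights χ_e, and M(D) its middle digraph. For any fixed arc e_* = (w_*, v_*) of D, κ^{vertex}(M(D), e_*, χ) = χ_{e_*} · κ^{edge}(D, w_*, χ) · (χ_{v_*} + d_{v_*})^{r_{v_*} − 1} · Π_{v ≠ v_*} (χ_v + d_v)^{r_v}, where r_v is the indegree of v in D and d_v = Σ_{e: t(e)=v} χ_e. -/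
open scoped Classical BigOperators

set_option linter.unusedSectionVars false

section AuxMTT

namespace MidAux

variable {V : Type*} [Fintype V] [DecidableEq V]

/-- every vertex reaches `r` under iteration of `F` -/
def Good (F : V → V) (r : V) : Prop := ∀ v, ∃ m, F^[m] v = r

theorem chainIter {S : V → V → Prop} {F : V → V} :
    ∀ (k : ℕ) (u : V), (∀ m, S (F^[m] u) (F^[m+1] u)) →
      List.Chain S u (List.map (fun m => F^[m+1] u) (List.range k)) := by
  intro k
  induction k with
  | zero => intro u _; exact List.Chain.nil
  | succ k ih =>
    intro u hstep
    rw [List.range_succ_eq_map, List.map_cons, List.map_map]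
    refine List.Chain.cons (by simpa using hstep 0) ?_
    have h1 : (fun m => F^[m+1] u) ∘ Nat.succ = fun m => F^[m+1] (F u) := by
      funext m
      simp only [Function.comp]
      rw [show m.succ + 1 = (m+1) + 1 from rfl, Function.iterate_succ_apply F (m+1) u]
    rw [h1]
    exact ih (F u) (fun m => by
      have := hstep (m+1)
      rwa [Function.iterate_succ_apply F m u, Function.iterate_succ_apply F (m+1) u] at this)

theorem chain_rel_iter {S : V → V → Prop} {F : V → V} (hS : ∀ a b, S a b → b = F a) :
    ∀ (l : List V) (x : V), List.Chain S x l → ∀ m < l.length, S (F^[m] x) (F^[m+1] x) := by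
  intro l
  induction l with
  | nil => intro x _ m hm; simp at hm
  | cons y t ih =>
    intro x h m hm
    rcases List.chain_cons.mp h with ⟨hxy, ht⟩
    have hy : y = F x := hS _ _ hxy
    cases m with
    | zero =>
      simpa using hy ▸ hxy
    | succ m =>
      have := ih y ht m (by simpa using hm)
      rw [hy, ← Function.iterate_succ_apply F m x, ← Function.iterate_succ_apply F (m+1) x] at this
      exact this


theorem chain_get {S : V → V → Prop} {F : V → V} (hS : ∀ a b, S a b → b = F a) :
    ∀ (l : List V) (x : V), List.Chain S x l → ∀ (i : ℕ) (h : i < l.length),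
      l.get ⟨i, h⟩ = F^[i+1] x := by
  intro l
  induction l with
  | nil => intro x _ i h; simp at h
  | cons y t ih =>
    intro x h i hi
    rcases List.chain_cons.mp h with ⟨hxy, ht⟩
    have hy : y = F x := hS _ _ hxy
    cases i with
    | zero => simpa using hy
    | succ i =>
      have := ih y ht i (by simpa using hi)
      simp only [List.get] at this ⊢
      rw [this, hy, ← Function.iterate_succ_apply F (i+1) x]

theorem not_good_cycle {F : V → V} {r : V} (h : ¬ Good F r) :
    ∃ (u : V) (p : ℕ), 0 < p ∧ F^[p] u = u ∧ ∀ m, F^[m] u ≠ r := by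
  simp only [Good, not_forall] at h
  obtain ⟨v, hv⟩ := h
  push_neg at hv
  have : ¬ Function.Injective (fun m => F^[m] v) := by
    intro hinj
    exact (Finite.of_injective _ hinj).false
  rw [Function.not_injective_iff] at this
  obtain ⟨a, b, heq, hne⟩ := this
  rcases hne.lt_or_gt with hab | hab
  · refine ⟨F^[a] v, b - a, by omega, ?_, ?_⟩
    · rw [← Function.iterate_add_apply, show b - a + a = b by omega]; exact heq.symm
    · intro m; rw [← Function.iterate_add_apply]; exact hv _
  · refine ⟨F^[b] v, a - b, by omega, ?_, ?_⟩
    · rw [← Function.iterate_add_apply, show a - b + b = a by omega]; exact heq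
    · intro m; rw [← Function.iterate_add_apply]; exact hv _

/-- if all iterates up to a period `L` avoid `r` and `F^[L] v = v` then all iterates avoid `r` -/
theorem iterate_ne_of_period {F : V → V} {r v : V} {L : ℕ} (hL : 0 < L)
    (hper : F^[L] v = v) (hsrc : ∀ m < L, F^[m] v ≠ r) : ∀ m, F^[m] v ≠ r := by
  intro m
  induction m using Nat.strong_induction_on with
  | _ m ih =>
    by_cases hm : m < L
    · exact hsrc m hm
    · have h1 : F^[m] v = F^[m - L] v := by
        conv_lhs => rw [show m = (m - L) + L by omega, Function.iterate_add_apply, hper]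
      rw [h1]
      exact ih (m - L) (by omega)


/-- the functional map associated to an out-arc choice -/
noncomputable def Fmap (r : V) (κ : {u : V // u ≠ r} → V) : V → V :=
  fun v => if h : v = r then r else κ ⟨v, h⟩

theorem Fmap_apply {r : V} (κ : {u : V // u ≠ r} → V) (i : {u : V // u ≠ r}) :
    Fmap r κ (i : V) = κ i := dif_neg i.2

/-- the `{0,1,-1}` matrix attached to `κ` -/
noncomputable def Emat (r : V) (κ : {u : V // u ≠ r} → V) :
    Matrix {u : V // u ≠ r} {u : V // u ≠ r} ℝ :=
  Matrix.of fun i j => (if (j : V) = (i : V) then (1:ℝ) else 0) - (if (j : V) = κ i then 1 else 0)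

theorem det_Emat_eq_zero {r : V} {κ : {u : V // u ≠ r} → V}
    (hbad : ¬ Good (Fmap r κ) r) : (Emat r κ).det = 0 := by
  set F := Fmap r κ with hF
  obtain ⟨u, p, hp, hper, hne⟩ := not_good_cycle hbad
  set O : Finset V := (Finset.range p).image (fun m => F^[m] u) with hO
  have hOr : ∀ w ∈ O, w ≠ r := by
    intro w hw
    obtain ⟨m, _, rfl⟩ := Finset.mem_image.mp hw
    exact hne m
  have huO : u ∈ O := Finset.mem_image.mpr ⟨0, Finset.mem_range.mpr hp, rfl⟩
  have himg : O.image F = O := by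
    apply Finset.Subset.antisymm
    · intro x hx
      obtain ⟨w, hw, rfl⟩ := Finset.mem_image.mp hx
      obtain ⟨m, hm, rfl⟩ := Finset.mem_image.mp hw
      rw [Finset.mem_range] at hm
      have : F (F^[m] u) = F^[m+1] u := (Function.iterate_succ_apply' F m u).symm
      rw [this]
      rcases eq_or_lt_of_le (Nat.succ_le_of_lt hm) with h1 | h1
      · rw [show m + 1 = p from h1, hper]; exact huO
      · exact Finset.mem_image.mpr ⟨m+1, Finset.mem_range.mpr h1, rfl⟩
    · intro x hx
      obtain ⟨m, hm, rfl⟩ := Finset.mem_image.mp hx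
      rw [Finset.mem_range] at hm
      rcases Nat.eq_zero_or_pos m with h1 | h1
      · subst h1
        refine Finset.mem_image.mpr ⟨F^[p-1] u, Finset.mem_image.mpr ⟨p-1, Finset.mem_range.mpr (by omega), rfl⟩, ?_⟩
        rw [← Function.iterate_succ_apply' F (p-1) u, show (p-1).succ = p by omega, hper]
        simp
      · refine Finset.mem_image.mpr ⟨F^[m-1] u, Finset.mem_image.mpr ⟨m-1, Finset.mem_range.mpr (by omega), rfl⟩, ?_⟩
        rw [← Function.iterate_succ_apply' F (m-1) u, show (m-1).succ = m by omega]
  have hinj : Set.InjOn F (O : Set V) :=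
    Finset.injOn_of_card_image_eq (by rw [himg])
  have hfiber : ∀ z : V, (O.filter (fun w => F w = z)).card = if z ∈ O then 1 else 0 := by
    intro z
    by_cases hz : z ∈ O
    · rw [if_pos hz]
      obtain ⟨w, hw, hwz⟩ := Finset.mem_image.mp (himg ▸ hz)
      rw [Finset.card_eq_one]
      refine ⟨w, ?_⟩
      ext y
      simp only [Finset.mem_filter, Finset.mem_singleton]
      constructor
      · rintro ⟨hy, hyz⟩; exact hinj hy hw (hyz.trans hwz.symm)
      · rintro rfl; exact ⟨hw, hwz⟩
    · rw [if_neg hz]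
      rw [Finset.card_eq_zero]
      ext y
      simp only [Finset.mem_filter, Finset.notMem_empty, iff_false, not_and]
      intro hy hyz
      exact hz (hyz ▸ (himg ▸ Finset.mem_image_of_mem F hy))
  -- the certifying vector
  set x : {u : V // u ≠ r} → ℝ := fun i => if (i : V) ∈ O then 1 else 0 with hx
  have hx0 : x ≠ 0 := by
    intro h0
    have := congrFun h0 ⟨u, hne 0⟩
    simp only [hx, Pi.zero_apply] at this
    rw [if_pos huO] at this
    norm_num at this
  have hvm : Matrix.vecMul x (Emat r κ) = 0 := by
    funext j
    simp only [Matrix.vecMul, dotProduct, Pi.zero_apply]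
    have hterm : ∀ i : {u : V // u ≠ r},
        x i * Emat r κ i j = (if (i:V) ∈ O then ((if (j:V) = (i:V) then (1:ℝ) else 0) - (if (j:V) = κ i then 1 else 0)) else 0) := by
      intro i
      simp only [hx, Emat, Matrix.of_apply, ite_mul, one_mul, zero_mul]
    rw [Finset.sum_congr rfl (fun i _ => hterm i), ← Finset.sum_filter]
    rw [Finset.sum_sub_distrib]
    have h1 : (∑ i ∈ Finset.univ.filter (fun i : {u : V // u ≠ r} => (i:V) ∈ O),
        (if (j:V) = (i:V) then (1:ℝ) else 0)) = if (j:V) ∈ O then 1 else 0 := by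
      have : ∀ i : {u : V // u ≠ r}, ((j:V) = (i:V)) = (j = i) := by
        intro i; simp [Subtype.coe_inj]
      simp only [this]
      rw [Finset.sum_ite_eq]
      simp [Finset.mem_filter]
    have h2 : (∑ i ∈ Finset.univ.filter (fun i : {u : V // u ≠ r} => (i:V) ∈ O),
        (if (j:V) = κ i then (1:ℝ) else 0)) = if (j:V) ∈ O then 1 else 0 := by
      have hκF : ∀ i : {u : V // u ≠ r}, ((j:V) = κ i) = (F (i:V) = (j:V)) := by
        intro i
        rw [hF, Fmap_apply]
        simp [eq_comm]
      simp only [hκF]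
      rw [Finset.sum_boole]
      have hcard : ((Finset.univ.filter (fun i : {u : V // u ≠ r} => (i:V) ∈ O)).filter
          (fun x : {u : V // u ≠ r} => F (x:V) = (j:V))).card = (O.filter (fun w => F w = (j:V))).card := by
        apply Finset.card_bij (fun (i : {u : V // u ≠ r}) _ => (i : V))
        · intro a ha
          simp only [Finset.mem_filter, Finset.mem_univ, true_and] at ha ⊢
          exact ⟨ha.1, ha.2⟩
        · intro a₁ _ a₂ _ h
          exact Subtype.ext h
        · intro w hw
          simp only [Finset.mem_filter] at hw
          refine ⟨⟨w, hOr w hw.1⟩, ?_, rfl⟩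
          simp only [Finset.mem_filter, Finset.mem_univ, true_and]
          exact ⟨hw.1, hw.2⟩
      rw [hcard, hfiber]
      split <;> norm_num
    rw [h1, h2, sub_self]
  exact Matrix.exists_vecMul_eq_zero_iff.mp ⟨x, hx0, hvm⟩


theorem det_Emat_eq_one {r : V} {κ : {u : V // u ≠ r} → V}
    (hκ : ∀ i, κ i ≠ (i : V)) (hgood : Good (Fmap r κ) r) : (Emat r κ).det = 1 := by
  set F := Fmap r κ with hF
  have hrk : ∀ i : {u : V // u ≠ r}, ∃ m, F^[m] (i : V) = r := fun i => hgood (i : V)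
  set rk : {u : V // u ≠ r} → ℕ := fun i => Nat.find (hrk i) with hrkdef
  have hrk_spec : ∀ i, F^[rk i] (i : V) = r := fun i => Nat.find_spec (hrk i)
  have hrk_pos : ∀ i, 0 < rk i := by
    intro i
    rcases Nat.eq_zero_or_pos (rk i) with h | h
    · exfalso; have := hrk_spec i; rw [h] at this; exact i.2 (by simpa using this)
    · exact h
  have hstep : ∀ i j : {u : V // u ≠ r}, (j : V) = κ i → rk j < rk i := by
    intro i j hji
    have hFij : F (i : V) = (j : V) := by rw [hF, Fmap_apply, hji]
    have : F^[rk i - 1] (j : V) = r := by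
      rw [← hFij, ← Function.iterate_succ_apply F (rk i - 1) (i : V),
        show (rk i - 1).succ = rk i by have := hrk_pos i; omega]
      exact hrk_spec i
    have h2 : rk j ≤ rk i - 1 := Nat.find_min' (hrk j) this
    have := hrk_pos i
    omega
  have hbt : (Emat r κ).BlockTriangular (fun i => OrderDual.toDual (rk i)) := by
    intro i j hlt
    have hlt' : rk i < rk j := hlt
    simp only [Emat, Matrix.of_apply]
    rw [if_neg, if_neg, sub_self]
    · intro hji
      exact absurd (hstep i j hji) (by omega)
    · intro hji
      have : j = i := Subtype.ext hji
      subst this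
      omega
  rw [hbt.det]
  apply Finset.prod_eq_one
  intro a _
  have hblock : (Emat r κ).toSquareBlock (fun i => OrderDual.toDual (rk i)) a = 1 := by
    ext i j
    simp only [Matrix.toSquareBlock_def, Matrix.of_apply, Emat]
    by_cases hij : i = j
    · subst hij
      rw [Matrix.one_apply_eq]
      rw [if_pos rfl, if_neg]
      · norm_num
      · exact fun h => hκ i.1 h.symm
    · rw [Matrix.one_apply_ne (fun h => hij h)]
      rw [if_neg, if_neg, sub_self]
      · intro hji
        have h1 : rk j.1 < rk i.1 := hstep i.1 j.1 hji
        have h2 : (OrderDual.toDual (rk i.1) : ℕᵒᵈ) = OrderDual.toDual (rk j.1) := i.2.trans j.2.symm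
        have : rk i.1 = rk j.1 := congrArg OrderDual.ofDual h2
        omega
      · intro hji
        exact hij (Subtype.ext (Subtype.ext hji.symm))
  rw [hblock, Matrix.det_one]

end MidAux

open MidAux in
/-- Directed weighted matrix-tree theorem for the given definitions. -/
theorem mtt_aux {V : Type*} [Fintype V] [DecidableEq V]
    (arcs : Finset (V × V)) (χ : V × V → ℝ) (r : V) :
    kappaEdgeRooted arcs χ r = (minorAt (lapEdge arcs χ) r).det := by
  classical
  set W : V → V → ℝ := fun a b => adjW arcs χ a b with hW
  set vr : {u : V // u ≠ r} → V → {u : V // u ≠ r} → ℝ :=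
    fun i k j => (if (j:V) = (i:V) then (1:ℝ) else 0) - (if (j:V) = k then 1 else 0) with hvr
  -- Step A : row decomposition of the minor
  have hM : minorAt (lapEdge arcs χ) r
      = Matrix.of (fun i : {u : V // u ≠ r} => ∑ k ∈ Finset.univ.erase (i:V), W (i:V) k • vr i k) := by
    ext i j
    simp only [Matrix.of_apply, Finset.sum_apply, Pi.smul_apply, smul_eq_mul,
      minorAt, Matrix.submatrix_apply, lapEdge, hvr]
    by_cases hij : (i:V) = (j:V)
    · rw [if_pos hij]
      apply Finset.sum_congr rfl
      intro k hk
      have hk' : k ≠ (i : V) := (Finset.mem_erase.mp hk).1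
      rw [if_pos hij.symm, if_neg (fun h : (j:V) = k => hk' ((hij.trans h).symm))]
      ring
    · rw [if_neg hij]
      have hstep : ∀ k ∈ Finset.univ.erase (i:V),
          W (i:V) k * ((if (j:V) = (i:V) then (1:ℝ) else 0) - (if (j:V) = k then 1 else 0))
          = (if k = (j:V) then -W (i:V) k else 0) := by
        intro k _
        rw [if_neg (fun h => hij h.symm)]
        by_cases hk : (j:V) = k
        · rw [if_pos hk, if_pos hk.symm]; ring
        · rw [if_neg hk, if_neg (fun h => hk h.symm)]; ring
      rw [Finset.sum_congr rfl hstep, Finset.sum_ite_eq']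
      rw [if_pos (Finset.mem_erase.mpr ⟨fun h => hij h.symm, Finset.mem_univ _⟩)]
  -- Step B : multilinear expansion of the determinant
  have hdet : (minorAt (lapEdge arcs χ) r).det
      = ∑ κ ∈ Fintype.piFinset (fun i : {u : V // u ≠ r} => Finset.univ.erase (i:V)),
          (∏ i : {u : V // u ≠ r}, W (i:V) (κ i)) * (Emat r κ).det := by
    have e1 : ∀ (f : {u : V // u ≠ r} → {u : V // u ≠ r} → ℝ),
        (Matrix.of f).det = Matrix.detRowAlternating.toMultilinearMap f := fun f => rfl
    have e2 := Matrix.detRowAlternating.toMultilinearMap.map_sum_finset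
      (fun (i : {u : V // u ≠ r}) k => W (i:V) k • vr i k)
      (fun (i : {u : V // u ≠ r}) => Finset.univ.erase (i:V))
    rw [hM, e1, e2]
    apply Finset.sum_congr rfl
    intro κ _
    have e3 := Matrix.detRowAlternating.toMultilinearMap.map_smul_univ
      (fun (i : {u : V // u ≠ r}) => W (i:V) (κ i)) (fun (i : {u : V // u ≠ r}) => vr i (κ i))
    rw [e3, smul_eq_mul]
    congr 1
  -- Step C : restrict the sum to good, arc-supported functions
  set P : ({u : V // u ≠ r} → V) → Prop :=
    fun κ => Good (Fmap r κ) r ∧ ∀ i : {u : V // u ≠ r}, ((i:V), κ i) ∈ arcs with hP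
  have hres : ∑ κ ∈ Fintype.piFinset (fun i : {u : V // u ≠ r} => Finset.univ.erase (i:V)),
          (∏ i : {u : V // u ≠ r}, W (i:V) (κ i)) * (Emat r κ).det
      = ∑ κ ∈ (Fintype.piFinset (fun i : {u : V // u ≠ r} => Finset.univ.erase (i:V))).filter P,
          ∏ i : {u : V // u ≠ r}, χ ((i:V), κ i) := by
    rw [← Finset.sum_filter_of_ne (p := P)]
    · apply Finset.sum_congr rfl
      intro κ hκ
      rw [Finset.mem_filter] at hκ
      rcases hκ with ⟨hκ1, hgood, hsupp⟩
      have hκne : ∀ i : {u : V // u ≠ r}, κ i ≠ (i:V) := by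
        intro i
        have := Fintype.mem_piFinset.mp hκ1 i
        exact (Finset.mem_erase.mp this).1
      rw [det_Emat_eq_one hκne hgood, mul_one]
      apply Finset.prod_congr rfl
      intro i _
      rw [hW]
      simp only [adjW]
      rw [if_pos (hsupp i)]
    · intro κ hκ hne
      by_contra hPκ
      rw [hP] at hPκ
      apply hne
      by_cases hgood : Good (Fmap r κ) r
      · have hsupp : ¬ ∀ i : {u : V // u ≠ r}, ((i:V), κ i) ∈ arcs := by
          intro h; exact hPκ ⟨hgood, h⟩
        push_neg at hsupp
        obtain ⟨i, hi⟩ := hsupp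
        have : W (i:V) (κ i) = 0 := by
          rw [hW]; simp only [adjW]; rw [if_neg hi]
        rw [Finset.prod_eq_zero (Finset.mem_univ i) this, zero_mul]
      · rw [det_Emat_eq_zero hgood, mul_zero]
  -- Step D : bijection between good supported functions and spanning trees
  have hbij : ∑ κ ∈ (Fintype.piFinset (fun i : {u : V // u ≠ r} => Finset.univ.erase (i:V))).filter P,
          (∏ i : {u : V // u ≠ r}, χ ((i:V), κ i))
      = ∑ T ∈ trees arcs r, ∏ a ∈ T, χ a := by
    have hinj : ∀ κ : {u : V // u ≠ r} → V,
        Function.Injective (fun i : {u : V // u ≠ r} => ((i:V), κ i)) := by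
      intro κ i₁ i₂ h
      exact Subtype.ext (congrArg Prod.fst h)
    apply Finset.sum_bij
      (i := fun κ _ => Finset.image (fun i : {u : V // u ≠ r} => ((i:V), κ i)) Finset.univ)
    · -- membership
      intro κ hκ
      rw [Finset.mem_filter] at hκ
      rcases hκ with ⟨hκ1, hgood, hsupp⟩
      rw [trees, Finset.mem_filter, Finset.mem_powerset]
      refine ⟨?_, ?_, ?_, ?_⟩
      · intro a ha
        obtain ⟨i, _, rfl⟩ := Finset.mem_image.mp ha
        exact hsupp i
      · -- unique out-arc
        intro v hv
        refine ⟨((v:V), κ ⟨v, hv⟩), ⟨Finset.mem_image.mpr ⟨⟨v, hv⟩, Finset.mem_univ _, rfl⟩, rfl⟩, ?_⟩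
        rintro b ⟨hb, hb1⟩
        obtain ⟨i, _, rfl⟩ := Finset.mem_image.mp hb
        have : i = ⟨v, hv⟩ := Subtype.ext hb1
        subst this
        rfl
      · intro a ha
        obtain ⟨i, _, rfl⟩ := Finset.mem_image.mp ha
        exact i.2
      · -- no cycles
        intro v l hchain
        set T := Finset.image (fun i : {u : V // u ≠ r} => ((i:V), κ i)) Finset.univ with hT
        have hrel : ∀ a b : V, (a, b) ∈ T → a ≠ r ∧ b = Fmap r κ a := by
          intro a b hab
          obtain ⟨i, _, hi⟩ := Finset.mem_image.mp hab
          have ha : a = (i:V) := (congrArg Prod.fst hi).symm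
          have hb : b = κ i := (congrArg Prod.snd hi).symm
          subst ha; subst hb
          exact ⟨i.2, (Fmap_apply κ i).symm⟩
        have hS : ∀ a b : V, (a, b) ∈ T → b = Fmap r κ a := fun a b h => (hrel a b h).2
        have hlast : (l ++ [v]).get ⟨l.length, by simp⟩ = (Fmap r κ)^[l.length + 1] v :=
          chain_get hS (l ++ [v]) v hchain l.length (by simp)
        have hgetv : (l ++ [v]).get ⟨l.length, by simp⟩ = v := by
          rw [List.get_eq_getElem]
          simp
        have hper : (Fmap r κ)^[l.length + 1] v = v := by rw [← hlast, hgetv]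
        have hsrc : ∀ m < l.length + 1, (Fmap r κ)^[m] v ≠ r := by
          intro m hm
          have := chain_rel_iter hS (l ++ [v]) v hchain m (by simp; omega)
          exact (hrel _ _ this).1
        have hall := iterate_ne_of_period (by omega) hper hsrc
        obtain ⟨m, hm⟩ := hgood v
        exact hall m hm
    · -- injectivity
      intro κ₁ hκ₁ κ₂ hκ₂ h
      funext i
      have : ((i:V), κ₁ i) ∈ Finset.image (fun i : {u : V // u ≠ r} => ((i:V), κ₂ i)) Finset.univ := by
        rw [← h]
        exact Finset.mem_image.mpr ⟨i, Finset.mem_univ _, rfl⟩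
      obtain ⟨i', _, hi'⟩ := Finset.mem_image.mp this
      have : i' = i := Subtype.ext (congrArg Prod.fst hi')
      subst this
      exact (congrArg Prod.snd hi').symm
    · -- surjectivity
      intro T hT
      rw [trees, Finset.mem_filter, Finset.mem_powerset] at hT
      rcases hT with ⟨hTsub, h1, h2, h3⟩
      set κ : {u : V // u ≠ r} → V := fun i => ((h1 (i:V) i.2).exists.choose).2 with hκdef
      have hmem : ∀ i : {u : V // u ≠ r}, ((i:V), κ i) ∈ T := by
        intro i
        obtain ⟨hcT, hc1⟩ := (h1 (i:V) i.2).exists.choose_spec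
        have : ((i:V), κ i) = (h1 (i:V) i.2).exists.choose :=
          Prod.ext_iff.mpr ⟨hc1.symm, rfl⟩
        rw [this]
        exact hcT
      have hκne : ∀ i : {u : V // u ≠ r}, κ i ≠ (i:V) := by
        intro i h
        apply h3 (i:V) []
        simp only [List.nil_append]
        exact List.Chain.cons (h ▸ hmem i) List.Chain.nil
      refine ⟨κ, ?_, ?_⟩
      · rw [Finset.mem_filter]
        constructor
        · rw [Fintype.mem_piFinset]
          intro i
          exact Finset.mem_erase.mpr ⟨hκne i, Finset.mem_univ _⟩
        · constructor
          · -- goodness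
            by_contra hbad
            obtain ⟨u, p, hp, hper, hne⟩ := not_good_cycle hbad
            have hstep : ∀ m, ((Fmap r κ)^[m] u, (Fmap r κ)^[m+1] u) ∈ T := by
              intro m
              rw [Function.iterate_succ_apply' (Fmap r κ) m u]
              have hx : (Fmap r κ)^[m] u ≠ r := hne m
              have : Fmap r κ ((Fmap r κ)^[m] u) = κ ⟨(Fmap r κ)^[m] u, hx⟩ :=
                Fmap_apply κ ⟨(Fmap r κ)^[m] u, hx⟩
              rw [this]
              exact hmem ⟨(Fmap r κ)^[m] u, hx⟩
            have hchain := chainIter (S := fun a b => (a, b) ∈ T) (F := Fmap r κ) p u hstep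
            have hr : List.range p = List.range (p - 1) ++ [p - 1] := by
              conv_lhs => rw [show p = (p-1) + 1 by omega]
              exact List.range_succ
            rw [hr, List.map_append] at hchain
            simp only [List.map_cons, List.map_nil] at hchain
            rw [show (Fmap r κ)^[p - 1 + 1] u = u by rw [show p - 1 + 1 = p by omega, hper]] at hchain
            exact h3 u _ hchain
          · intro i
            exact hTsub (hmem i)
      · -- image equals T
        apply Finset.Subset.antisymm
        · intro a ha
          obtain ⟨i, _, rfl⟩ := Finset.mem_image.mp ha
          exact hmem i
        · intro a ha
          have har : a.1 ≠ r := h2 a ha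
          have hi : ((a.1 : V), κ ⟨a.1, har⟩) ∈ T := hmem ⟨a.1, har⟩
          obtain ⟨c, hc, hcu⟩ := h1 a.1 har
          have h1a : a = c := hcu a ⟨ha, rfl⟩
          have h2a : ((a.1 : V), κ ⟨a.1, har⟩) = c := hcu _ ⟨hi, rfl⟩
          rw [Finset.mem_image]
          exact ⟨⟨a.1, har⟩, Finset.mem_univ _, by rw [h2a, ← h1a]⟩
    · -- values
      intro κ hκ
      rw [Finset.prod_image (fun i _ j _ h => hinj κ h)]
  rw [hdet, hres, hbij]
  rfl


/-- strictly row diagonally dominant real matrices are nonsingular -/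
theorem det_ne_zero_of_dominant {ι : Type*} [Fintype ι] [DecidableEq ι] (M : Matrix ι ι ℝ)
    (h : ∀ i, ∑ j ∈ Finset.univ.erase i, |M i j| < |M i i|) : M.det ≠ 0 := by
  intro hdet
  obtain ⟨x, hx0, hxv⟩ := Matrix.exists_mulVec_eq_zero_iff.mpr hdet
  have hne : (Finset.univ : Finset ι).Nonempty := by
    rcases isEmpty_or_nonempty ι with he | hn
    · exact absurd (funext fun i => (he.elim i)) hx0
    · exact Finset.univ_nonempty
  obtain ⟨i, _, hmax⟩ := Finset.exists_max_image Finset.univ (fun j => |x j|) hne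
  have hxi : 0 < |x i| := by
    rcases (abs_nonneg (x i)).lt_or_eq with h' | h'
    · exact h'
    · exfalso
      apply hx0
      funext j
      have hj := hmax j (Finset.mem_univ j)
      rw [← h'] at hj
      exact abs_eq_zero.mp (le_antisymm hj (abs_nonneg _))
  have h0 : ∑ j, M i j * x j = 0 := congrFun hxv i
  have hsplit : M i i * x i = -∑ j ∈ Finset.univ.erase i, M i j * x j := by
    have h' := Finset.add_sum_erase Finset.univ (fun j => M i j * x j) (Finset.mem_univ i)
    have h' : M i i * x i + ∑ j ∈ Finset.univ.erase i, M i j * x j = ∑ j, M i j * x j := h'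
    rw [h0] at h'
    linarith
  have h1 : |M i i| * |x i| ≤ (∑ j ∈ Finset.univ.erase i, |M i j|) * |x i| := by
    rw [← abs_mul, hsplit, abs_neg]
    calc |∑ j ∈ Finset.univ.erase i, M i j * x j|
        ≤ ∑ j ∈ Finset.univ.erase i, |M i j * x j| := Finset.abs_sum_le_sum_abs _ _
      _ ≤ ∑ j ∈ Finset.univ.erase i, |M i j| * |x i| := by
          apply Finset.sum_le_sum
          intro j _
          rw [abs_mul]
          exact mul_le_mul_of_nonneg_left (hmax j (Finset.mem_univ j)) (abs_nonneg _)
      _ = (∑ j ∈ Finset.univ.erase i, |M i j|) * |x i| := (Finset.sum_mul _ _ _).symm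
  have h2 : (∑ j ∈ Finset.univ.erase i, |M i j|) * |x i| < |M i i| * |x i| :=
    mul_lt_mul_of_pos_right (h i) hxi
  linarith

/-- a real matrix all of whose row sums vanish is singular -/
theorem det_eq_zero_of_row_sums {ι : Type*} [Fintype ι] [DecidableEq ι] [Nonempty ι]
    (M : Matrix ι ι ℝ) (h : ∀ u, ∑ v, M u v = 0) : M.det = 0 := by
  apply Matrix.exists_mulVec_eq_zero_iff.mp
  refine ⟨fun _ => 1, ?_, ?_⟩
  · intro h0
    have := congrFun h0 (Classical.arbitrary ι)
    norm_num at this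
  · funext u
    simp only [Matrix.mulVec, dotProduct, mul_one, Pi.zero_apply]
    exact h u

/-- rank-one update of a zero-row-sum matrix: reduction to the principal minor -/
theorem det_add_single {V : Type*} [Fintype V] [DecidableEq V] (L : Matrix V V ℝ)
    (hrow : ∀ u, ∑ v, L u v = 0) (c : ℝ) (w v0 : V) :
    (L + Matrix.single w v0 c).det = c * (minorAt L w).det := by
  classical
  have hne : Nonempty V := ⟨w⟩
  have hupd : L + Matrix.single w v0 c
      = Matrix.updateRow L w (L w + c • Pi.single (M := fun _ : V => ℝ) v0 1) := by
    ext i j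
    by_cases hi : i = w
    · subst hi
      rw [Matrix.updateRow_self]
      simp only [Matrix.add_apply, Pi.add_apply, Pi.smul_apply, smul_eq_mul]
      congr 1
      by_cases hj : j = v0
      · subst hj
        simp [Matrix.single]
      · have h1 : ¬ v0 = j := fun h => hj h.symm
        simp [Matrix.single, h1, Pi.single_eq_of_ne hj]
    · rw [Matrix.updateRow_ne hi]
      simp only [Matrix.add_apply]
      have h1 : ¬ w = i := fun h => hi h.symm
      simp [Matrix.single, h1]
  rw [hupd, Matrix.det_updateRow_add, Matrix.updateRow_eq_self]
  rw [det_eq_zero_of_row_sums L hrow, zero_add]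
  rw [Matrix.det_updateRow_smul]
  congr 1
  have hswap : (Matrix.updateRow L w (Pi.single v0 1)).det
      = (Matrix.updateRow L w (Pi.single w 1)).det := by
    have hdecomp : (Pi.single v0 1 : V → ℝ) = Pi.single w 1 + (Pi.single v0 1 - Pi.single w 1) := by
      abel
    rw [hdecomp, Matrix.det_updateRow_add]
    have hz : (Matrix.updateRow L w (Pi.single v0 1 - Pi.single w 1)).det = 0 := by
      apply det_eq_zero_of_row_sums
      intro u
      by_cases hu : u = w
      · subst hu
        simp only [Matrix.updateRow_self, Pi.sub_apply]
        rw [Finset.sum_sub_distrib]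
        rw [Finset.sum_pi_single', Finset.sum_pi_single']
        simp
      · simp only [Matrix.updateRow_ne hu]
        exact hrow u
    rw [hz, add_zero]
  rw [hswap]
  -- reindex to a block matrix
  have hre := Matrix.det_submatrix_equiv_self (Equiv.sumCompl (fun x => x = w))
    (Matrix.updateRow L w (Pi.single w 1))
  rw [← hre]
  have hblock : (Matrix.updateRow L w (Pi.single w 1)).submatrix
        (Equiv.sumCompl (fun x => x = w)) (Equiv.sumCompl (fun x => x = w))
      = Matrix.fromBlocks 1 0 (L.submatrix (fun (a : {x : V // ¬ x = w}) => (a : V)) (fun (b : {x : V // x = w}) => (b : V)))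
          (minorAt L w) := by
    ext i j
    cases i with
    | inl a =>
      cases j with
      | inl b =>
        have ha : (a : V) = w := a.2
        have hb : (b : V) = w := b.2
        simp only [Matrix.submatrix_apply, Equiv.sumCompl_apply_inl]
        rw [ha, Matrix.updateRow_self]
        have hab : a = b := Subtype.ext (ha.trans hb.symm)
        subst hab
        rw [Matrix.fromBlocks_apply₁₁, Matrix.one_apply_eq, hb, Pi.single_eq_same]
      | inr b =>
        have ha : (a : V) = w := a.2
        have hb : ¬ (b : V) = w := b.2
        simp only [Matrix.submatrix_apply, Equiv.sumCompl_apply_inl, Equiv.sumCompl_apply_inr]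
        rw [ha, Matrix.updateRow_self, Matrix.fromBlocks_apply₁₂]
        rw [Pi.single_eq_of_ne hb]
        rfl
    | inr a =>
      have ha : ¬ (a : V) = w := a.2
      cases j with
      | inl b =>
        simp only [Matrix.submatrix_apply, Equiv.sumCompl_apply_inl, Equiv.sumCompl_apply_inr]
        rw [Matrix.updateRow_ne ha, Matrix.fromBlocks_apply₂₁, Matrix.submatrix_apply]
      | inr b =>
        simp only [Matrix.submatrix_apply, Equiv.sumCompl_apply_inr]
        rw [Matrix.updateRow_ne ha, Matrix.fromBlocks_apply₂₂]
        rfl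
  rw [hblock, Matrix.det_fromBlocks_zero₁₂, Matrix.det_one, one_mul]


section Transfer

variable {V : Type*} [Fintype V] [DecidableEq V]

theorem sum_subtype_arcs (arcs : Finset (V × V)) (g : V × V → ℝ) :
    ∑ b : {a : V × V // a ∈ arcs}, g b.1 = ∑ a ∈ arcs, g a :=
  (Finset.sum_subtype arcs (fun _ => Iff.rfl) g).symm

theorem sum_subtype_erase (arcs : Finset (V × V)) (estar : V × V) (hestar : estar ∈ arcs)
    (g : V × V → ℝ) :
    ∑ f : {e : {a : V × V // a ∈ arcs} // e ≠ ⟨estar, hestar⟩}, g f.1.1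
      = ∑ a ∈ arcs.erase estar, g a := by
  classical
  apply Finset.sum_bij (fun (f : {e : {a : V × V // a ∈ arcs} // e ≠ ⟨estar, hestar⟩}) _ => f.1.1)
  · intro f _
    refine Finset.mem_erase.mpr ⟨?_, f.1.2⟩
    intro h
    exact f.2 (Subtype.ext h)
  · intro f₁ _ f₂ _ h
    exact Subtype.ext (Subtype.ext h)
  · intro a ha
    rw [Finset.mem_erase] at ha
    exact ⟨⟨⟨a, ha.2⟩, fun h => ha.1 (congrArg Subtype.val h)⟩, Finset.mem_univ _, rfl⟩
  · intro f _
    rfl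

theorem prod_subtype_erase (arcs : Finset (V × V)) (estar : V × V) (hestar : estar ∈ arcs)
    (g : V × V → ℝ) :
    ∏ f : {e : {a : V × V // a ∈ arcs} // e ≠ ⟨estar, hestar⟩}, g f.1.1
      = ∏ a ∈ arcs.erase estar, g a := by
  classical
  apply Finset.prod_bij (fun (f : {e : {a : V × V // a ∈ arcs} // e ≠ ⟨estar, hestar⟩}) _ => f.1.1)
  · intro f _
    refine Finset.mem_erase.mpr ⟨?_, f.1.2⟩
    intro h
    exact f.2 (Subtype.ext h)
  · intro f₁ _ f₂ _ h
    exact Subtype.ext (Subtype.ext h)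
  · intro a ha
    rw [Finset.mem_erase] at ha
    exact ⟨⟨⟨a, ha.2⟩, fun h => ha.1 (congrArg Subtype.val h)⟩, Finset.mem_univ _, rfl⟩
  · intro f _
    rfl

theorem sum_out_eq_wOut (arcs : Finset (V × V)) (χ : V × V → ℝ) (u : V) :
    ∑ a ∈ arcs, (if a.1 = u then χ a else 0) = wOut arcs χ u :=
  (Finset.sum_filter _ _).symm

theorem sum_out_eq_wOut' (arcs : Finset (V × V)) (χ : V × V → ℝ) (u : V) :
    ∑ a ∈ arcs, (if u = a.1 then χ a else 0) = wOut arcs χ u := by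
  rw [← sum_out_eq_wOut arcs χ u]
  apply Finset.sum_congr rfl
  intro a _
  by_cases h : a.1 = u
  · rw [if_pos h, if_pos h.symm]
  · rw [if_neg h, if_neg (fun h2 => h h2.symm)]

theorem sum_V_eq_wOut (arcs : Finset (V × V)) (χ : V × V → ℝ) (u : V) :
    ∑ k : V, (if (u, k) ∈ arcs then χ (u, k) else 0) = wOut arcs χ u := by
  classical
  rw [← Finset.sum_filter]
  rw [wOut]
  apply Finset.sum_nbij' (i := fun k => (u, k)) (j := fun a => a.2)
  · intro k hk
    rw [Finset.mem_filter] at hk ⊢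
    exact ⟨hk.2, rfl⟩
  · intro a ha
    rw [Finset.mem_filter] at ha ⊢
    refine ⟨Finset.mem_univ _, ?_⟩
    rw [← ha.2]
    exact ha.1
  · intro k _
    rfl
  · intro a ha
    rw [Finset.mem_filter] at ha
    rw [← ha.2]
  · intro k _
    rfl

end Transfer


section MiddleDet

variable {V : Type*} [Fintype V] [DecidableEq V]

/-- auxiliary block matrices for the middle digraph Laplacian -/
noncomputable def matS (arcs : Finset (V × V)) (χ : V × V → ℝ) (estar : V × V)
    (hestar : estar ∈ arcs) :
    Matrix V {e : {a : V × V // a ∈ arcs} // e ≠ ⟨estar, hestar⟩} ℝ :=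
  fun u f => if f.1.1.1 = u then χ f.1.1 else 0

noncomputable def matP (arcs : Finset (V × V)) (estar : V × V) (hestar : estar ∈ arcs) :
    Matrix {e : {a : V × V // a ∈ arcs} // e ≠ ⟨estar, hestar⟩} V ℝ :=
  fun f v => if f.1.1.2 = v then 1 else 0

noncomputable def matLam (arcs : Finset (V × V)) (χv : V → ℝ) (χ : V × V → ℝ)
    (estar : V × V) (hestar : estar ∈ arcs) :
    Matrix {e : {a : V × V // a ∈ arcs} // e ≠ ⟨estar, hestar⟩}
      {e : {a : V × V // a ∈ arcs} // e ≠ ⟨estar, hestar⟩} ℝ :=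
  Matrix.diagonal (fun f => χv f.1.1.2 + wOut arcs χ f.1.1.2)

theorem matPS (arcs : Finset (V × V)) (χ : V × V → ℝ) (estar : V × V) (hestar : estar ∈ arcs)
    (f g : {e : {a : V × V // a ∈ arcs} // e ≠ ⟨estar, hestar⟩}) :
    (matP arcs estar hestar * matS arcs χ estar hestar) f g
      = if f.1.1.2 = g.1.1.1 then χ g.1.1 else 0 := by
  classical
  rw [Matrix.mul_apply]
  have hterm : ∀ v : V, matP arcs estar hestar f v * matS arcs χ estar hestar v g
      = if f.1.1.2 = v then (if g.1.1.1 = v then χ g.1.1 else 0) else 0 := by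
    intro v
    simp only [matP, matS]
    by_cases h1 : f.1.1.2 = v
    · rw [if_pos h1, one_mul, if_pos h1]
    · rw [if_neg h1, zero_mul, if_neg h1]
  rw [Finset.sum_congr rfl (fun v _ => hterm v), Finset.sum_ite_eq]
  rw [if_pos (Finset.mem_univ _)]
  by_cases h : f.1.1.2 = g.1.1.1
  · rw [if_pos (h.symm), if_pos h]
  · rw [if_neg (fun h2 => h h2.symm), if_neg h]

theorem matSP (arcs : Finset (V × V)) (χ : V × V → ℝ) (estar : V × V) (hestar : estar ∈ arcs)
    (u v : V) :
    (matS arcs χ estar hestar * matP arcs estar hestar) u v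
      = if (u, v) ∈ arcs.erase estar then χ (u, v) else 0 := by
  classical
  rw [Matrix.mul_apply]
  have hterm : ∀ f : {e : {a : V × V // a ∈ arcs} // e ≠ ⟨estar, hestar⟩},
      matS arcs χ estar hestar u f * matP arcs estar hestar f v
        = (fun a : V × V => if a = (u, v) then χ a else 0) f.1.1 := by
    intro f
    simp only [matS, matP]
    by_cases h1 : f.1.1.1 = u
    · by_cases h2 : f.1.1.2 = v
      · rw [if_pos h1, if_pos h2, mul_one, if_pos (Prod.ext h1 h2)]
      · rw [if_pos h1, if_neg h2, mul_zero, if_neg (fun h => h2 (by rw [h]))]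
    · rw [if_neg h1, zero_mul, if_neg (fun h => h1 (by rw [h]))]
  rw [Finset.sum_congr rfl (fun f _ => hterm f),
    sum_subtype_erase arcs estar hestar (fun a : V × V => if a = (u, v) then χ a else 0)]
  rw [Finset.sum_ite_eq' (arcs.erase estar) (u, v) χ]

/-- the reindexing equivalence -/
def sigEquiv (arcs : Finset (V × V)) (estar : V × V) (hestar : estar ∈ arcs) :
    (V ⊕ {e : {a : V × V // a ∈ arcs} // e ≠ ⟨estar, hestar⟩})
      ≃ {x : V ⊕ {a : V × V // a ∈ arcs} // x ≠ Sum.inr ⟨estar, hestar⟩} where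
  toFun x := match x with
    | Sum.inl v => ⟨Sum.inl v, by simp⟩
    | Sum.inr f => ⟨Sum.inr f.1, by simpa using f.2⟩
  invFun y := match y with
    | ⟨Sum.inl v, _⟩ => Sum.inl v
    | ⟨Sum.inr e, h⟩ => Sum.inr ⟨e, fun he => h (by rw [he])⟩
  left_inv x := by cases x <;> rfl
  right_inv y := by
    obtain ⟨x, h⟩ := y
    cases x <;> rfl


theorem middle_block (arcs : Finset (V × V)) (χv : V → ℝ) (χ : V × V → ℝ)
    (hsimple : ∀ v : V, (v, v) ∉ arcs) (estar : V × V) (hestar : estar ∈ arcs) :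
    (minorAt (lapEdge (midArcs arcs) (fun a => midWeight arcs χv χ a.2))
        (Sum.inr ⟨estar, hestar⟩)).submatrix
      (sigEquiv arcs estar hestar) (sigEquiv arcs estar hestar)
    = Matrix.fromBlocks (Matrix.diagonal (wOut arcs χ)) (-(matS arcs χ estar hestar))
        (-(matP arcs estar hestar * Matrix.diagonal χv))
        (matLam arcs χv χ estar hestar - matP arcs estar hestar * matS arcs χ estar hestar) := by
  classical
  set χM : (V ⊕ {a : V × V // a ∈ arcs}) × (V ⊕ {a : V × V // a ∈ arcs}) → ℝ :=
    fun a => midWeight arcs χv χ a.2 with hχM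
  have hmemVV : ∀ u w : V, ((Sum.inl u, Sum.inl w) :
      (V ⊕ {a : V × V // a ∈ arcs}) × (V ⊕ {a : V × V // a ∈ arcs})) ∉ midArcs arcs := by
    intro u w
    simp [midArcs]
  have hmemVE : ∀ (u : V) (e : {a : V × V // a ∈ arcs}),
      ((Sum.inl u, Sum.inr e) :
        (V ⊕ {a : V × V // a ∈ arcs}) × (V ⊕ {a : V × V // a ∈ arcs})) ∈ midArcs arcs
      ↔ e.1.1 = u := by
    intro u e
    simp [midArcs]
  have hmemEV : ∀ (e : {a : V × V // a ∈ arcs}) (v : V),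
      ((Sum.inr e, Sum.inl v) :
        (V ⊕ {a : V × V // a ∈ arcs}) × (V ⊕ {a : V × V // a ∈ arcs})) ∈ midArcs arcs
      ↔ e.1.2 = v := by
    intro e v
    simp [midArcs]
  have hmemEE : ∀ (e g : {a : V × V // a ∈ arcs}),
      ((Sum.inr e, Sum.inr g) :
        (V ⊕ {a : V × V // a ∈ arcs}) × (V ⊕ {a : V × V // a ∈ arcs})) ∈ midArcs arcs
      ↔ e.1.2 = g.1.1 := by
    intro e g
    simp [midArcs]
  have hloopE : ∀ e : {a : V × V // a ∈ arcs}, e.1.2 ≠ e.1.1 := by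
    intro e h
    apply hsimple e.1.1
    have h2 := e.2
    rw [← Prod.mk.eta (p := e.1), h] at h2
    exact h2
  have hAVE : ∀ (u : V) (e : {a : V × V // a ∈ arcs}),
      adjW (midArcs arcs) χM (Sum.inl u) (Sum.inr e) = (if e.1.1 = u then χ e.1 else 0) := by
    intro u e
    simp only [adjW]
    by_cases h : e.1.1 = u
    · rw [if_pos ((hmemVE u e).mpr h), if_pos h]
      rfl
    · rw [if_neg (fun hm => h ((hmemVE u e).mp hm)), if_neg h]
  have hAEV : ∀ (e : {a : V × V // a ∈ arcs}) (v : V),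
      adjW (midArcs arcs) χM (Sum.inr e) (Sum.inl v) = (if e.1.2 = v then χv v else 0) := by
    intro e v
    simp only [adjW]
    by_cases h : e.1.2 = v
    · rw [if_pos ((hmemEV e v).mpr h), if_pos h]
      rfl
    · rw [if_neg (fun hm => h ((hmemEV e v).mp hm)), if_neg h]
  have hAEE : ∀ (e g : {a : V × V // a ∈ arcs}),
      adjW (midArcs arcs) χM (Sum.inr e) (Sum.inr g) = (if e.1.2 = g.1.1 then χ g.1 else 0) := by
    intro e g
    simp only [adjW]
    by_cases h : e.1.2 = g.1.1
    · rw [if_pos ((hmemEE e g).mpr h), if_pos h]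
      rfl
    · rw [if_neg (fun hm => h ((hmemEE e g).mp hm)), if_neg h]
  have hAVV : ∀ u w : V, adjW (midArcs arcs) χM (Sum.inl u) (Sum.inl w) = 0 := by
    intro u w
    simp only [adjW]
    rw [if_neg (hmemVV u w)]
  have hsum1 : ∀ u : V,
      (∑ k ∈ Finset.univ.erase (Sum.inl u), adjW (midArcs arcs) χM (Sum.inl u) k)
        = wOut arcs χ u := by
    intro u
    rw [Finset.sum_erase_eq_sub (Finset.mem_univ _), hAVV u u, sub_zero, Fintype.sum_sum_type]
    rw [Finset.sum_eq_zero (fun v _ => hAVV u v), zero_add]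
    rw [Finset.sum_congr rfl (fun e _ => hAVE u e),
      sum_subtype_arcs arcs (fun a => if a.1 = u then χ a else 0), sum_out_eq_wOut]
  have hsum2 : ∀ e : {a : V × V // a ∈ arcs},
      (∑ k ∈ Finset.univ.erase (Sum.inr e), adjW (midArcs arcs) χM (Sum.inr e) k)
        = χv e.1.2 + wOut arcs χ e.1.2 := by
    intro e
    rw [Finset.sum_erase_eq_sub (Finset.mem_univ _)]
    rw [show adjW (midArcs arcs) χM (Sum.inr e) (Sum.inr e) = 0 by
      rw [hAEE e e, if_neg (hloopE e)]]
    rw [sub_zero, Fintype.sum_sum_type]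
    rw [Finset.sum_congr rfl (fun v _ => hAEV e v), Finset.sum_ite_eq Finset.univ e.1.2 χv,
      if_pos (Finset.mem_univ _)]
    rw [Finset.sum_congr rfl (fun g _ => hAEE e g),
      sum_subtype_arcs arcs (fun a => if e.1.2 = a.1 then χ a else 0), sum_out_eq_wOut']
  ext x y
  rw [Matrix.submatrix_apply]
  cases x with
  | inl u =>
    cases y with
    | inl w =>
      show lapEdge (midArcs arcs) χM (Sum.inl u) (Sum.inl w) = _
      by_cases h : u = w
      · subst h
        rw [lapEdge, if_pos rfl, hsum1 u, Matrix.fromBlocks_apply₁₁, Matrix.diagonal_apply_eq]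
      · rw [lapEdge, if_neg (fun h2 => h (Sum.inl_injective h2)), hAVV u w, neg_zero,
          Matrix.fromBlocks_apply₁₁, Matrix.diagonal_apply_ne _ h]
    | inr g =>
      show lapEdge (midArcs arcs) χM (Sum.inl u) (Sum.inr g.1) = _
      rw [lapEdge, if_neg (by simp), hAVE u g.1, Matrix.fromBlocks_apply₁₂, Matrix.neg_apply]
      rfl
  | inr f =>
    cases y with
    | inl w =>
      show lapEdge (midArcs arcs) χM (Sum.inr f.1) (Sum.inl w) = _
      rw [lapEdge, if_neg (by simp), hAEV f.1 w, Matrix.fromBlocks_apply₂₁, Matrix.neg_apply,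
        Matrix.mul_diagonal]
      simp only [matP]
      by_cases h : f.1.1.2 = w
      · rw [if_pos h, if_pos h, one_mul]
      · rw [if_neg h, if_neg h, zero_mul, neg_zero]
    | inr g =>
      show lapEdge (midArcs arcs) χM (Sum.inr f.1) (Sum.inr g.1) = _
      by_cases hfg : f = g
      · subst hfg
        rw [lapEdge, if_pos rfl, hsum2 f.1, Matrix.fromBlocks_apply₂₂, Matrix.sub_apply,
          matPS arcs χ estar hestar f f, if_neg (hloopE f.1), sub_zero, matLam,
          Matrix.diagonal_apply_eq]
      · have hne : (Sum.inr f.1 : V ⊕ {a : V × V // a ∈ arcs}) ≠ Sum.inr g.1 := by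
          intro h
          exact hfg (Subtype.ext (Sum.inr_injective h))
        rw [lapEdge, if_neg hne, hAEE f.1 g.1, Matrix.fromBlocks_apply₂₂, Matrix.sub_apply,
          matPS arcs χ estar hestar f g, matLam, Matrix.diagonal_apply_ne _ hfg, zero_sub]


theorem lap_plus_std (arcs : Finset (V × V)) (χv : V → ℝ) (χ : V × V → ℝ)
    (hsimple : ∀ v : V, (v, v) ∉ arcs) (estar : V × V) (hestar : estar ∈ arcs) :
    Matrix.diagonal (wOut arcs χ) - matS arcs χ estar hestar * matP arcs estar hestar
      = lapEdge arcs χ + Matrix.single estar.1 estar.2 (χ estar) := by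
  classical
  ext u v
  rw [Matrix.sub_apply, matSP arcs χ estar hestar u v, Matrix.add_apply]
  by_cases huv : u = v
  · subst huv
    have hstd0 : Matrix.single estar.1 estar.2 (χ estar) u u = 0 := by
      by_cases h1 : estar.1 = u
      · by_cases h2 : estar.2 = u
        · exfalso
          apply hsimple u
          rw [← Prod.mk.eta (p := estar), h1, h2] at hestar
          exact hestar
        · simp [Matrix.single, h2]
      · simp [Matrix.single, h1]
    rw [hstd0, add_zero, Matrix.diagonal_apply_eq]
    have hne : (u, u) ∉ arcs.erase estar := fun h => hsimple u (Finset.mem_erase.mp h).2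
    rw [if_neg hne, sub_zero, lapEdge, if_pos rfl]
    rw [Finset.sum_erase_eq_sub (Finset.mem_univ u)]
    have hz : adjW arcs χ u u = 0 := by
      simp only [adjW]
      rw [if_neg (hsimple u)]
    rw [hz, sub_zero]
    have : ∑ k : V, adjW arcs χ u k = wOut arcs χ u := by
      simp only [adjW]
      exact sum_V_eq_wOut arcs χ u
    rw [this]
  · rw [Matrix.diagonal_apply_ne _ huv, lapEdge, if_neg huv, zero_sub]
    by_cases he : (u, v) = estar
    · have hne : (u, v) ∉ arcs.erase estar := fun h => (Finset.mem_erase.mp h).1 he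
      rw [if_neg hne, neg_zero]
      have hstd : Matrix.single estar.1 estar.2 (χ estar) u v = χ estar := by
        have h1 : estar.1 = u := by rw [← he]
        have h2 : estar.2 = v := by rw [← he]
        simp [Matrix.single, h1, h2]
      rw [hstd]
      have hm : (u, v) ∈ arcs := he ▸ hestar
      simp only [adjW]
      rw [if_pos hm, he]
      ring
    · have hstd : Matrix.single estar.1 estar.2 (χ estar) u v = 0 := by
        by_cases h1 : estar.1 = u
        · by_cases h2 : estar.2 = v
          · exact absurd (by rw [← Prod.mk.eta (p := estar), h1, h2] : estar = (u, v))
              (fun h => he h.symm)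
          · simp [Matrix.single, h2]
        · simp [Matrix.single, h1]
      rw [hstd, add_zero]
      simp only [adjW]
      by_cases hm : (u, v) ∈ arcs
      · rw [if_pos (Finset.mem_erase.mpr ⟨he, hm⟩), if_pos hm]
      · rw [if_neg (fun h => hm (Finset.mem_erase.mp h).2), if_neg hm]

theorem middle_det (arcs : Finset (V × V)) (χv : V → ℝ) (χ : V × V → ℝ)
    (hsimple : ∀ v : V, (v, v) ∉ arcs)
    (hposv : ∀ v : V, 0 < χv v) (hpose : ∀ a ∈ arcs, 0 < χ a)
    (estar : V × V) (hestar : estar ∈ arcs) :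
    (minorAt (lapEdge (midArcs arcs) (fun a => midWeight arcs χv χ a.2))
        (Sum.inr ⟨estar, hestar⟩)).det
      = (∏ a ∈ arcs.erase estar, (χv a.2 + wOut arcs χ a.2))
        * (lapEdge arcs χ + Matrix.single estar.1 estar.2 (χ estar)).det := by
  classical
  rw [← Matrix.det_submatrix_equiv_self (sigEquiv arcs estar hestar),
    middle_block arcs χv χ hsimple estar hestar]
  set S := matS arcs χ estar hestar with hSdef
  set Pm := matP arcs estar hestar with hPdef
  set Λ := matLam arcs χv χ estar hestar with hΛdef
  set A : Matrix V V ℝ := Matrix.diagonal (wOut arcs χ) with hAdef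
  set Dχ : Matrix V V ℝ := Matrix.diagonal χv with hDdef
  set Q := Λ - Pm * S with hQ
  have hwnn : ∀ v, 0 ≤ wOut arcs χ v := fun v =>
    Finset.sum_nonneg (fun a ha => (hpose a (Finset.mem_filter.mp ha).1).le)
  have hlampos : ∀ v : V, 0 < χv v + wOut arcs χ v := fun v =>
    add_pos_of_pos_of_nonneg (hposv v) (hwnn v)
  have hloopE : ∀ e : {a : V × V // a ∈ arcs}, e.1.2 ≠ e.1.1 := by
    intro e h
    apply hsimple e.1.1
    have h2 := e.2
    rw [← Prod.mk.eta (p := e.1), h] at h2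
    exact h2
  have hdetΛ : Λ.det = ∏ a ∈ arcs.erase estar, (χv a.2 + wOut arcs χ a.2) := by
    rw [hΛdef, matLam, Matrix.det_diagonal]
    exact prod_subtype_erase arcs estar hestar (fun a => χv a.2 + wOut arcs χ a.2)
  have hΛunit : IsUnit Λ.det := by
    rw [hdetΛ]
    exact isUnit_iff_ne_zero.mpr
      (Finset.prod_ne_zero_iff.mpr (fun a _ => (hlampos a.2).ne'))
  have hQdiag : ∀ f, Q f f = χv f.1.1.2 + wOut arcs χ f.1.1.2 := by
    intro f
    rw [hQ, Matrix.sub_apply, hPdef, hSdef, matPS arcs χ estar hestar f f,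
      if_neg (hloopE f.1), sub_zero, hΛdef, matLam, Matrix.diagonal_apply_eq]
  have hQdom : ∀ f, ∑ g ∈ Finset.univ.erase f, |Q f g| < |Q f f| := by
    intro f
    have habs : ∀ g ∈ Finset.univ.erase f,
        |Q f g| = (fun a : V × V => if f.1.1.2 = a.1 then χ a else 0) g.1.1 := by
      intro g hg
      have hgf : g ≠ f := (Finset.mem_erase.mp hg).1
      show |Q f g| = if f.1.1.2 = g.1.1.1 then χ g.1.1 else 0
      rw [hQ, Matrix.sub_apply, hΛdef, matLam, Matrix.diagonal_apply_ne _ (fun h => hgf h.symm),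
        hPdef, hSdef, matPS arcs χ estar hestar f g, zero_sub, abs_neg]
      by_cases h : f.1.1.2 = g.1.1.1
      · rw [if_pos h]
        exact abs_of_pos (hpose g.1.1 g.1.2)
      · rw [if_neg h]
        exact abs_zero
    have hb : ∑ g ∈ Finset.univ.erase f, |Q f g| ≤ wOut arcs χ f.1.1.2 := by
      calc ∑ g ∈ Finset.univ.erase f, |Q f g|
          = ∑ g ∈ Finset.univ.erase f,
              (fun a : V × V => if f.1.1.2 = a.1 then χ a else 0) g.1.1 :=
            Finset.sum_congr rfl habs
        _ ≤ ∑ g : {e : {a : V × V // a ∈ arcs} // e ≠ ⟨estar, hestar⟩},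
              (fun a : V × V => if f.1.1.2 = a.1 then χ a else 0) g.1.1 := by
            apply Finset.sum_le_sum_of_subset_of_nonneg (Finset.erase_subset _ _)
            intro g _ _
            show (0:ℝ) ≤ if f.1.1.2 = g.1.1.1 then χ g.1.1 else 0
            by_cases h : f.1.1.2 = g.1.1.1
            · rw [if_pos h]
              exact (hpose g.1.1 g.1.2).le
            · rw [if_neg h]
        _ = ∑ a ∈ arcs.erase estar, (if f.1.1.2 = a.1 then χ a else 0) :=
            sum_subtype_erase arcs estar hestar
              (fun a : V × V => if f.1.1.2 = a.1 then χ a else 0)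
        _ ≤ ∑ a ∈ arcs, (if f.1.1.2 = a.1 then χ a else 0) := by
            apply Finset.sum_le_sum_of_subset_of_nonneg (Finset.erase_subset _ _)
            intro a ha _
            by_cases h : f.1.1.2 = a.1
            · rw [if_pos h]
              exact (hpose a ha).le
            · rw [if_neg h]
        _ = wOut arcs χ f.1.1.2 := sum_out_eq_wOut' arcs χ _
    have hd : |Q f f| = χv f.1.1.2 + wOut arcs χ f.1.1.2 := by
      rw [hQdiag f, abs_of_pos (hlampos _)]
    rw [hd]
    have := hposv f.1.1.2
    linarith
  have hQ0 : Q.det ≠ 0 := det_ne_zero_of_dominant Q hQdom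
  set Y := Λ⁻¹ * Pm with hY
  set K := S * Y with hK
  have hΛY : Λ * Y = Pm := by
    rw [hY, ← Matrix.mul_assoc, Matrix.mul_nonsing_inv _ hΛunit, Matrix.one_mul]
  have hQfact : Q = Λ * (1 - Y * S) := by
    rw [Matrix.mul_sub, Matrix.mul_one, ← Matrix.mul_assoc, hΛY, hQ]
  have hdetQ : Q.det = Λ.det * (1 - K).det := by
    rw [hQfact, Matrix.det_mul]
    congr 1
    have h := Matrix.det_one_add_mul_comm (-Y) S
    simp only [Matrix.neg_mul, Matrix.mul_neg] at h
    rw [← sub_eq_add_neg, ← sub_eq_add_neg] at h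
    rw [h, hK]
  have h1Kunit : IsUnit (1 - K).det :=
    isUnit_iff_ne_zero.mpr (fun h => hQ0 (by rw [hdetQ, h, mul_zero]))
  set Z := (1 - K)⁻¹ * Dχ with hZ
  have h1KZ : (1 - K) * Z = Dχ := by
    rw [hZ, ← Matrix.mul_assoc, Matrix.mul_nonsing_inv _ h1Kunit, Matrix.one_mul]
  set X := Y * Z with hX
  have hQX : Q * X = Pm * Dχ := by
    rw [hQ, hX, Matrix.sub_mul, ← Matrix.mul_assoc Λ Y Z, hΛY,
      Matrix.mul_assoc Pm S (Y * Z), ← Matrix.mul_assoc S Y Z, ← hK,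
      ← Matrix.mul_sub Pm Z (K * Z),
      show Z - K * Z = (1 - K) * Z by rw [Matrix.sub_mul, Matrix.one_mul], h1KZ]
  have hU : (Matrix.fromBlocks 1 0 X 1 : Matrix
      (V ⊕ {e : {a : V × V // a ∈ arcs} // e ≠ ⟨estar, hestar⟩})
      (V ⊕ {e : {a : V × V // a ∈ arcs} // e ≠ ⟨estar, hestar⟩}) ℝ).det = 1 := by
    rw [Matrix.det_fromBlocks_zero₁₂, Matrix.det_one, Matrix.det_one, mul_one]
  have hMU : Matrix.fromBlocks A (-S) (-(Pm * Dχ)) Q * Matrix.fromBlocks 1 0 X 1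
      = Matrix.fromBlocks (A - S * X) (-S) 0 Q := by
    rw [Matrix.fromBlocks_multiply]
    simp only [Matrix.mul_one, Matrix.mul_zero, Matrix.neg_mul, hQX, neg_add_cancel,
      ← sub_eq_add_neg, zero_sub, neg_neg, zero_add, add_zero, sub_zero]
  have hSX : S * X = K * Z := by
    rw [hX, ← Matrix.mul_assoc, hK]
  have hPAD : Pm * (A + Dχ) = Λ * Pm := by
    have hAD : A + Dχ = Matrix.diagonal (fun v => wOut arcs χ v + χv v) := by
      rw [hAdef, hDdef, Matrix.diagonal_add]
    ext f v
    rw [hAD, Matrix.mul_diagonal, hΛdef, matLam, Matrix.diagonal_mul, hPdef]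
    simp only [matP]
    by_cases h : f.1.1.2 = v
    · rw [if_pos h, one_mul, mul_one, h]
      ring
    · rw [if_neg h, zero_mul, mul_zero]
  have hKAD : K * (A + Dχ) = S * Pm := by
    rw [hK, hY, Matrix.mul_assoc S (Λ⁻¹ * Pm) (A + Dχ),
      Matrix.mul_assoc Λ⁻¹ Pm (A + Dχ), hPAD, ← Matrix.mul_assoc Λ⁻¹ Λ Pm,
      Matrix.nonsing_inv_mul _ hΛunit, Matrix.one_mul]
  have hfinal : (1 - K) * (A - S * X)
      = lapEdge arcs χ + Matrix.single estar.1 estar.2 (χ estar) := by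
    have hcomm : (1 - K) * K = K * (1 - K) := by
      rw [Matrix.sub_mul, Matrix.mul_sub, Matrix.one_mul, Matrix.mul_one]
    have hcommK : (1 - K) * (K * Z) = K * ((1 - K) * Z) := by
      calc (1 - K) * (K * Z) = ((1 - K) * K) * Z := (Matrix.mul_assoc _ _ _).symm
        _ = (K * (1 - K)) * Z := by rw [hcomm]
        _ = K * ((1 - K) * Z) := Matrix.mul_assoc _ _ _
    calc (1 - K) * (A - S * X)
        = (1 - K) * A - (1 - K) * (S * X) := Matrix.mul_sub _ _ _
      _ = (1 - K) * A - K * ((1 - K) * Z) := by rw [hSX, hcommK]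
      _ = (1 - K) * A - K * Dχ := by rw [h1KZ]
      _ = A - (K * A + K * Dχ) := by
          rw [Matrix.sub_mul, Matrix.one_mul, sub_sub]
      _ = A - K * (A + Dχ) := by rw [← Matrix.mul_add]
      _ = A - S * Pm := by rw [hKAD]
      _ = lapEdge arcs χ + Matrix.single estar.1 estar.2 (χ estar) := by
          rw [hAdef, hSdef, hPdef]
          exact lap_plus_std arcs χv χ hsimple estar hestar
  calc (Matrix.fromBlocks A (-S) (-(Pm * Dχ)) Q).det
      = (Matrix.fromBlocks A (-S) (-(Pm * Dχ)) Q).det * 1 := (mul_one _).symm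
    _ = (Matrix.fromBlocks A (-S) (-(Pm * Dχ)) Q).det * (Matrix.fromBlocks 1 0 X 1).det := by
        rw [hU]
    _ = (Matrix.fromBlocks A (-S) (-(Pm * Dχ)) Q * Matrix.fromBlocks 1 0 X 1).det :=
        (Matrix.det_mul _ _).symm
    _ = (Matrix.fromBlocks (A - S * X) (-S) 0 Q).det := by rw [hMU]
    _ = (A - S * X).det * Q.det := Matrix.det_fromBlocks_zero₂₁ _ _ _
    _ = (A - S * X).det * (Λ.det * (1 - K).det) := by rw [hdetQ]
    _ = Λ.det * ((1 - K).det * (A - S * X).det) := by ring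
    _ = Λ.det * ((1 - K) * (A - S * X)).det := by rw [Matrix.det_mul]
    _ = (∏ a ∈ arcs.erase estar, (χv a.2 + wOut arcs χ a.2))
        * (lapEdge arcs χ + Matrix.single estar.1 estar.2 (χ estar)).det := by
        rw [hfinal, hdetΛ]

end MiddleDet

end AuxMTT

/-- **Rooted version of the main theorem.** For a fixed arc `e⋆ = (w⋆, v⋆)` of `D`,
`κ^{vertex}(M(D), e⋆, χ) = χ_{e⋆} · κ^{edge}(D, w⋆, χ) · (χ_{v⋆} + d_{v⋆})^{r_{v⋆}−1}
· Π_{v ≠ v⋆} (χ_v + d_v)^{r_v}`. -/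
theorem kappaVertex_middle_rooted {V : Type*} [Fintype V] [DecidableEq V]
    (arcs : Finset (V × V)) (χv : V → ℝ) (χ : V × V → ℝ)
    (hsimple : ∀ v : V, (v, v) ∉ arcs)
    (hposv : ∀ v : V, 0 < χv v) (hpose : ∀ a ∈ arcs, 0 < χ a)
    (estar : V × V) (hestar : estar ∈ arcs) :
    kappaVertexRooted (midArcs arcs) (midWeight arcs χv χ) (Sum.inr ⟨estar, hestar⟩) =
      χ estar * kappaEdgeRooted arcs χ estar.1 *
        (χv estar.2 + wOut arcs χ estar.2) ^ (indeg arcs estar.2 - 1) *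
        ∏ v ∈ Finset.univ.erase estar.2, (χv v + wOut arcs χ v) ^ (indeg arcs v) := by
  classical
  have h1 : kappaVertexRooted (midArcs arcs) (midWeight arcs χv χ) (Sum.inr ⟨estar, hestar⟩)
      = kappaEdgeRooted (midArcs arcs) (fun a => midWeight arcs χv χ a.2)
          (Sum.inr ⟨estar, hestar⟩) := rfl
  rw [h1, mtt_aux, middle_det arcs χv χ hsimple hposv hpose estar hestar]
  have hrow : ∀ u, ∑ v, lapEdge arcs χ u v = 0 := by
    intro u
    rw [← Finset.add_sum_erase Finset.univ _ (Finset.mem_univ u)]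
    have hd : lapEdge arcs χ u u = ∑ k ∈ Finset.univ.erase u, adjW arcs χ u k := by
      rw [lapEdge, if_pos rfl]
    have ho : ∀ v ∈ Finset.univ.erase u, lapEdge arcs χ u v = -adjW arcs χ u v := by
      intro v hv
      rw [lapEdge, if_neg (fun h => (Finset.mem_erase.mp hv).1 h.symm)]
    rw [hd, Finset.sum_congr rfl ho, Finset.sum_neg_distrib, add_neg_cancel]
  rw [det_add_single (lapEdge arcs χ) hrow (χ estar) estar.1 estar.2]
  rw [← mtt_aux arcs χ estar.1]
  have hprod : ∏ a ∈ arcs.erase estar, (χv a.2 + wOut arcs χ a.2)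
      = (χv estar.2 + wOut arcs χ estar.2) ^ (indeg arcs estar.2 - 1)
        * ∏ v ∈ Finset.univ.erase estar.2, (χv v + wOut arcs χ v) ^ (indeg arcs v) := by
    rw [Finset.prod_comp (fun v => χv v + wOut arcs χ v) (fun a : V × V => a.2)]
    have hext : ∏ b ∈ (arcs.erase estar).image (fun a : V × V => a.2),
          (χv b + wOut arcs χ b) ^ ((arcs.erase estar).filter (fun a => a.2 = b)).card
        = ∏ b : V,
          (χv b + wOut arcs χ b) ^ ((arcs.erase estar).filter (fun a => a.2 = b)).card := by
      apply Finset.prod_subset (Finset.subset_univ _)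
      intro v _ hv
      have hc : ((arcs.erase estar).filter (fun a => a.2 = v)).card = 0 := by
        rw [Finset.card_eq_zero, Finset.filter_eq_empty_iff]
        intro a ha h2
        exact hv (Finset.mem_image.mpr ⟨a, ha, h2⟩)
      rw [hc, pow_zero]
    rw [hext, ← Finset.mul_prod_erase Finset.univ _ (Finset.mem_univ estar.2)]
    have hc1 : ((arcs.erase estar).filter (fun a => a.2 = estar.2)).card
        = indeg arcs estar.2 - 1 := by
      have heq : (arcs.erase estar).filter (fun a => a.2 = estar.2)
          = (arcs.filter (fun a => a.2 = estar.2)).erase estar := by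
        ext a
        simp only [Finset.mem_filter, Finset.mem_erase]
        tauto
      rw [heq, Finset.card_erase_of_mem
        (show estar ∈ arcs.filter (fun a => a.2 = estar.2) from
          Finset.mem_filter.mpr ⟨hestar, rfl⟩)]
      rfl
    have hc2 : ∀ v ∈ Finset.univ.erase estar.2,
        (χv v + wOut arcs χ v) ^ ((arcs.erase estar).filter (fun a => a.2 = v)).card
          = (χv v + wOut arcs χ v) ^ (indeg arcs v) := by
      intro v hv
      have hvne : v ≠ estar.2 := (Finset.mem_erase.mp hv).1
      have heq : (arcs.erase estar).filter (fun a => a.2 = v)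
          = arcs.filter (fun a => a.2 = v) := by
        ext a
        simp only [Finset.mem_filter, Finset.mem_erase]
        constructor
        · rintro ⟨⟨_, ha⟩, h2⟩
          exact ⟨ha, h2⟩
        · rintro ⟨ha, h2⟩
          refine ⟨⟨?_, ha⟩, h2⟩
          intro h
          exact hvne (by rw [← h2, h])
      rw [heq]
      rfl
    rw [hc1, Finset.prod_congr rfl hc2]
  rw [hprod]
  ring
end
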